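/- The same storage matrix certifies passivity of the feedback interconnection: under the assumptions of the interconnection construction, the matrix [[A_cᵀΞ+ΞA_c, ΞB_c−C_cᵀ],[B_cᵀΞ−C_c, −(D_c+D_cᵀ)]] is negative semidefinite, where (A_c,B_c,C_c,D_c) are the closed-loop matrices defined by A_c = A_b − B_b(I+SD_b)⁻¹SC_b, B_c = B_b(I+SD_b)⁻¹ℬ, C_c = ℬᵀ(I+D_bS)⁻¹C_b, D_c = ℬᵀD_b(I+SD_b)⁻¹ℬ. -/

import Mathlib

open Matrix

def NegSemidef {m : Type*} [Fintype m] (M : Matrix m m ℝ) : Prop :=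
  ∀ z : m → ℝ, z ⬝ᵥ (M *ᵥ z) ≤ 0

lemma quad_expand {a b : ℕ} (Ξ A : Matrix (Fin a) (Fin a) ℝ) (B : Matrix (Fin a) (Fin b) ℝ)
    (C : Matrix (Fin b) (Fin a) ℝ) (D : Matrix (Fin b) (Fin b) ℝ) (x : Fin a → ℝ) (w : Fin b → ℝ) :
    x ⬝ᵥ ((Aᵀ * Ξ + Ξ * A) *ᵥ x + (Ξ * B - Cᵀ) *ᵥ w) +
      w ⬝ᵥ ((Bᵀ * Ξ - C) *ᵥ x + (-(D + Dᵀ)) *ᵥ w)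
      = (A *ᵥ x + B *ᵥ w) ⬝ᵥ (Ξ *ᵥ x) + x ⬝ᵥ (Ξ *ᵥ (A *ᵥ x + B *ᵥ w))
        - (w ⬝ᵥ (C *ᵥ x + D *ᵥ w) + (C *ᵥ x + D *ᵥ w) ⬝ᵥ w) := by
  simp only [Matrix.add_mulVec, Matrix.sub_mulVec, Matrix.neg_mulVec, ← Matrix.mulVec_mulVec,
    dotProduct_add, dotProduct_sub, dotProduct_neg, add_dotProduct, Matrix.mulVec_add,
    Matrix.dotProduct_mulVec _ (Aᵀ) _, Matrix.dotProduct_mulVec _ (Bᵀ) _,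
    Matrix.dotProduct_mulVec _ (Cᵀ) _, Matrix.dotProduct_mulVec _ (Dᵀ) _,
    Matrix.vecMul_transpose]
  ring

theorem stmt4 {n pb pc : ℕ}
    (Ab : Matrix (Fin n) (Fin n) ℝ) (Bb : Matrix (Fin n) (Fin pb) ℝ)
    (Cb : Matrix (Fin pb) (Fin n) ℝ) (Db : Matrix (Fin pb) (Fin pb) ℝ)
    (Ξ : Matrix (Fin n) (Fin n) ℝ) (hΞ : Ξ.PosDef)
    (hLMI : NegSemidef
      (fromBlocks (Abᵀ * Ξ + Ξ * Ab) (Ξ * Bb - Cbᵀ) (Bbᵀ * Ξ - Cb) (-(Db + Dbᵀ))))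
    (S : Matrix (Fin pb) (Fin pb) ℝ) (hS : S.PosSemidef)
    (hDS : IsUnit (1 + Db * S)) (hSD : IsUnit (1 + S * Db))
    (𝓑 : Matrix (Fin pb) (Fin pc) ℝ)
    (Ac : Matrix (Fin n) (Fin n) ℝ) (Bc : Matrix (Fin n) (Fin pc) ℝ)
    (Cc : Matrix (Fin pc) (Fin n) ℝ) (Dc : Matrix (Fin pc) (Fin pc) ℝ)
    (hAc : Ac = Ab - Bb * (1 + S * Db)⁻¹ * S * Cb)
    (hBc : Bc = Bb * (1 + S * Db)⁻¹ * 𝓑)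
    (hCc : Cc = 𝓑ᵀ * (1 + Db * S)⁻¹ * Cb)
    (hDc : Dc = 𝓑ᵀ * Db * (1 + S * Db)⁻¹ * 𝓑) :
    NegSemidef
      (fromBlocks (Acᵀ * Ξ + Ξ * Ac) (Ξ * Bc - Ccᵀ) (Bcᵀ * Ξ - Cc) (-(Dc + Dcᵀ))) := by
  intro z
  set P := (1 + S * Db)⁻¹ with hPdef
  set Q := (1 + Db * S)⁻¹ with hQdef
  have hP1 : (1 + S * Db) * P = 1 := Matrix.mul_nonsing_inv _ ((Matrix.isUnit_iff_isUnit_det _).mp hSD)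
  have hQ2 : Q * (1 + Db * S) = 1 := Matrix.nonsing_inv_mul _ ((Matrix.isUnit_iff_isUnit_det _).mp hDS)
  have hDbP : Db * P = Q * Db := by
    linear_combination (norm := noncomm_ring) (Q * Db) * hP1 - hQ2 * (Db * P)
  have hQid : Q = 1 - Db * P * S := by
    linear_combination (norm := noncomm_ring) hQ2 + hDbP * S
  set x := z ∘ Sum.inl with hx
  set w := z ∘ Sum.inr with hw
  have hz : x ⊕ᵥ w = z := Sum.elim_comp_inl_inr z
  set cx := Cb *ᵥ x with hcx
  set u := P *ᵥ (𝓑 *ᵥ w - S *ᵥ cx) with hu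
  set y := cx + Db *ᵥ u with hy
  rw [← hz, Matrix.fromBlocks_mulVec, sumElim_dotProduct_sumElim]
  simp only [Sum.elim_comp_inl, Sum.elim_comp_inr]
  rw [quad_expand]
  -- closed-loop state map equals base state map with input u
  have f1 : Ac *ᵥ x + Bc *ᵥ w = Ab *ᵥ x + Bb *ᵥ u := by
    simp only [hAc, hBc, hu, hcx, Matrix.sub_mulVec, Matrix.mulVec_sub,
      ← Matrix.mulVec_mulVec]
    abel
  -- closed-loop output equals 𝓑ᵀ y
  have f2 : Cc *ᵥ x + Dc *ᵥ w = 𝓑ᵀ *ᵥ y := by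
    simp only [hCc, hDc, hQid, hy, hu, hcx, Matrix.sub_mulVec, Matrix.mulVec_sub,
      Matrix.mulVec_add, Matrix.one_mulVec, ← Matrix.mulVec_mulVec]
    abel
  -- feedback relation
  have f3 : 𝓑 *ᵥ w = u + S *ᵥ y := by
    have h5 : u + S *ᵥ (Db *ᵥ u) = 𝓑 *ᵥ w - S *ᵥ cx := by
      have h6 : (1 + S * Db) *ᵥ u = 𝓑 *ᵥ w - S *ᵥ cx := by
        rw [hu, Matrix.mulVec_mulVec, hP1, Matrix.one_mulVec]
      rw [Matrix.add_mulVec, Matrix.one_mulVec, ← Matrix.mulVec_mulVec] at h6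
      exact h6
    rw [hy, Matrix.mulVec_add]
    linear_combination -h5
  rw [f1, f2]
  have hy' : Cb *ᵥ x + Db *ᵥ u = y := by rw [hy, hcx]
  have hb := hLMI (x ⊕ᵥ u)
  rw [Matrix.fromBlocks_mulVec, sumElim_dotProduct_sumElim] at hb
  simp only [Sum.elim_comp_inl, Sum.elim_comp_inr] at hb
  rw [quad_expand, hy'] at hb
  have hSy : (0:ℝ) ≤ y ⬝ᵥ S *ᵥ y := by
    have := hS.dotProduct_mulVec_nonneg y
    simpa using this
  have e1 : w ⬝ᵥ (𝓑ᵀ *ᵥ y) = u ⬝ᵥ y + y ⬝ᵥ (S *ᵥ y) := by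
    rw [Matrix.dotProduct_mulVec, Matrix.vecMul_transpose, f3, add_dotProduct,
      dotProduct_comm (S *ᵥ y) y]
  have e2 : (𝓑ᵀ *ᵥ y) ⬝ᵥ w = u ⬝ᵥ y + y ⬝ᵥ (S *ᵥ y) := by
    rw [dotProduct_comm]; exact e1
  have e3 : u ⬝ᵥ y = y ⬝ᵥ u := dotProduct_comm u y
  linarith [hb, hSy, e1, e2, e3]
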